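/- Let E(λ) = L(λ)/∏_{i=1}^n (1 − u_i λ^{a_i}) be a rational function of λ over a field of iterated Laurent series, with each monomial u_i λ^{a_i} either 'small' or 'large' in the field ordering, and suppose deg_λ E < 0 (E is proper in λ). With the partial fraction decomposition E = Σ_i A_i(λ)/(1 − u_i λ^{a_i}) (deg A_i < a_i), the constant term of the series expansion of E in λ (expanding each 1/(1 − u_i λ^{a_i}) as Σ_k (u_i λ^{a_i})^k when small and as Σ_k −(u_i λ^{a_i})^{−k−1} when large) equals Σ_{i : u_i λ^{a_i} small} A_i(0). -/

import Mathlib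

/-- The inner variable `λ`, viewed inside the iterated Laurent series field
`G = ℂ((λ))((y))`. -/
noncomputable def lamG : LaurentSeries (LaurentSeries ℂ) :=
  HahnSeries.C (HahnSeries.single (1 : ℤ) (1 : ℂ))

/-- An element of `G = ℂ((λ))((y))` is free of `λ` if each of its `y`-coefficients is a
constant (a `λ`-monomial of exponent `0`). -/
def FreeOfLambda (g : LaurentSeries (LaurentSeries ℂ)) : Prop :=
  ∀ e : ℤ, ∃ cst : ℂ, g.coeff e = HahnSeries.single (0 : ℤ) cst

open HahnSeries Finset

/-- coefficient of a product with a single, at an arbitrary index. -/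
lemma coeff_mul_single' {V : Type*} [NonUnitalNonAssocSemiring V]
    (x : HahnSeries ℤ V) (g : ℤ) (s : V) (y : ℤ) :
    (x * HahnSeries.single g s).coeff y = x.coeff (y - g) * s := by
  have := HahnSeries.coeff_mul_single_add (x := x) (r := s) (a := y - g) (b := g)
  rwa [sub_add_cancel] at this

lemma coeff_lb {V : Type*} [Zero V] (x : HahnSeries ℤ V) :
    ∃ N : ℤ, ∀ m : ℤ, m < N → x.coeff m = 0 := by
  rcases eq_or_ne x 0 with rfl | hx
  · exact ⟨0, fun m _ => rfl⟩
  · exact ⟨x.order, fun m hm => HahnSeries.coeff_eq_zero_of_lt_order hm⟩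

lemma coeff_sum {V : Type*} [AddCommMonoid V] {α : Type*} (s : Finset α)
    (f : α → HahnSeries ℤ V) (g : ℤ) :
    (∑ i ∈ s, f i).coeff g = ∑ i ∈ s, (f i).coeff g :=
  map_sum (HahnSeries.coeff.addMonoidHom g) f s

lemma lamG_pow (t : ℕ) : lamG ^ t =
    HahnSeries.single (0 : ℤ) (HahnSeries.single (t : ℤ) (1 : ℂ)) := by
  simp [lamG, HahnSeries.single_pow]

/-- double monomial in `G`. -/
noncomputable def Msing (g b : ℤ) (d : ℂ) : LaurentSeries (LaurentSeries ℂ) :=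
  HahnSeries.single g (HahnSeries.single b d)

lemma Msing_pow (g b : ℤ) (d : ℂ) (k : ℕ) :
    Msing g b d ^ k = Msing ((k : ℤ) * g) ((k : ℤ) * b) (d ^ k) := by
  rw [Msing, Msing, HahnSeries.single_pow, HahnSeries.single_pow]
  norm_num [zsmul_eq_mul]

lemma coeff_mul_Msing (x : LaurentSeries (LaurentSeries ℂ)) (g b : ℤ) (d : ℂ) (y : ℤ) :
    (x * Msing g b d).coeff y = x.coeff (y - g) * HahnSeries.single b d :=
  coeff_mul_single' x g _ y

lemma mul_sumG (P : LaurentSeries (LaurentSeries ℂ)) (K : ℕ)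
    (f : ℕ → LaurentSeries (LaurentSeries ℂ)) :
    P * ∑ k ∈ Finset.range K, f k = ∑ k ∈ Finset.range K, P * f k := by
  induction K with
  | zero => rw [Finset.sum_range_zero, Finset.sum_range_zero]; ring
  | succ K ih => rw [Finset.sum_range_succ, Finset.sum_range_succ, ← ih]; ring

section
variable (a : ℕ) (A : ℕ → LaurentSeries (LaurentSeries ℂ))

lemma hPc (hA : ∀ t, FreeOfLambda (A t)) (y' : ℤ) :
    (∑ t ∈ Finset.range a, A t * lamG ^ t).coeff y' =
      ∑ t ∈ Finset.range a, single (t : ℤ) (((A t).coeff y').coeff 0) := by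
  rw [_root_.coeff_sum]
  refine Finset.sum_congr rfl fun t _ => ?_
  show (A t * lamG ^ t).coeff y' = _
  rw [lamG_pow, coeff_mul_single_zero]
  obtain ⟨cst, hcst⟩ := hA t y'
  rw [hcst, single_mul_single, zero_add, coeff_single_same, mul_one]

lemma hPzero (hA : ∀ t, FreeOfLambda (A t)) (y' b : ℤ) (d : ℂ)
    (hb : (a : ℤ) ≤ -b ∨ 0 < b) :
    (((∑ t ∈ Finset.range a, A t * lamG ^ t).coeff y') * single b d).coeff 0 = 0 := by
  rw [hPc a A hA y', Finset.sum_mul, _root_.coeff_sum]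
  refine Finset.sum_eq_zero fun t ht => ?_
  rw [single_mul_single, coeff_single_of_ne]
  rw [Finset.mem_range] at ht
  rcases hb with hb | hb
  · have : (t : ℤ) + b ≤ (t : ℤ) - a := by omega
    have ht' : (t : ℤ) < a := by exact_mod_cast ht
    omega
  · have : 0 < (t : ℤ) + b := by positivity
    omega

lemma hP0 (ha : 0 < a) (hA : ∀ t, FreeOfLambda (A t)) (y' : ℤ) :
    ((∑ t ∈ Finset.range a, A t * lamG ^ t).coeff y').coeff 0 =
      ((A 0).coeff y').coeff 0 := by
  rw [hPc a A hA y', _root_.coeff_sum]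
  rw [Finset.sum_eq_single_of_mem 0 (Finset.mem_range.2 ha)]
  · show (single ((0:ℕ):ℤ) _).coeff 0 = _
    rw [Nat.cast_zero, coeff_single_same]
  · intro t _ ht
    show (single ((t:ℕ):ℤ) _).coeff 0 = 0
    rw [coeff_single_of_ne]
    exact_mod_cast fun h => ht (by exact_mod_cast h.symm)

end

lemma key' (c : ℂ) (hc : c ≠ 0) (e : ℤ) (a : ℕ) (ha : 0 < a)
    (A : ℕ → LaurentSeries (LaurentSeries ℂ)) (hA : ∀ t, FreeOfLambda (A t))
    (X : LaurentSeries (LaurentSeries ℂ))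
    (h2 : X * (1 - Msing e (a : ℤ) c) = ∑ t ∈ Finset.range a, A t * lamG ^ t)
    (yexp : ℤ) :
    (X.coeff yexp).coeff 0 = if 0 ≤ e then ((A 0).coeff yexp).coeff 0 else 0 := by
  by_cases he : 0 ≤ e
  · rw [if_pos he]
    obtain ⟨N, hN⟩ := coeff_lb X
    obtain ⟨N2, hN2⟩ := coeff_lb (X.coeff yexp)
    obtain ⟨K, hK1, hKN, hKN2⟩ :
        ∃ K : ℕ, 0 < K ∧ yexp - N < (K : ℤ) ∧ (N2.natAbs : ℤ) < K :=
      ⟨(yexp - N).toNat + N2.natAbs + 1, by omega, by omega, by omega⟩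
    have h1 : (∑ k ∈ Finset.range K, Msing e (a : ℤ) c ^ k) * (1 - Msing e (a : ℤ) c)
        = 1 - Msing e (a : ℤ) c ^ K := by
      have h := geom_sum_mul (Msing e (a : ℤ) c) K
      calc (∑ k ∈ Finset.range K, Msing e (a : ℤ) c ^ k) * (1 - Msing e (a : ℤ) c)
          = -((∑ k ∈ Finset.range K, Msing e (a : ℤ) c ^ k) * (Msing e (a : ℤ) c - 1)) := by
            ring
        _ = -(Msing e (a : ℤ) c ^ K - 1) := by rw [h]
        _ = 1 - Msing e (a : ℤ) c ^ K := by ring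
    have hiter : X = (∑ t ∈ Finset.range a, A t * lamG ^ t) *
        (∑ k ∈ Finset.range K, Msing e (a : ℤ) c ^ k) + X * Msing e (a : ℤ) c ^ K := by
      calc X = X * ((∑ k ∈ Finset.range K, Msing e (a : ℤ) c ^ k) * (1 - Msing e (a : ℤ) c)
                + Msing e (a : ℤ) c ^ K) := by rw [h1]; ring
        _ = (X * (1 - Msing e (a : ℤ) c)) * (∑ k ∈ Finset.range K, Msing e (a : ℤ) c ^ k)
                + X * Msing e (a : ℤ) c ^ K := by ring
        _ = _ := by rw [h2]
    rw [hiter, HahnSeries.coeff_add, HahnSeries.coeff_add]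
    have hterm2 : ((X * Msing e (a : ℤ) c ^ K).coeff yexp).coeff 0 = 0 := by
      rw [Msing_pow, coeff_mul_Msing, coeff_mul_single']
      by_cases he0 : e = 0
      · subst he0
        have hKa : (K : ℤ) ≤ (K : ℤ) * a :=
          le_mul_of_one_le_right (Int.natCast_nonneg K) (by omega)
        rw [mul_zero, sub_zero, hN2 _ (by omega), zero_mul]
      · have hepos : 0 < e := lt_of_le_of_ne he (Ne.symm he0)
        have hKe : (K : ℤ) ≤ (K : ℤ) * e :=
          le_mul_of_one_le_right (Int.natCast_nonneg K) (by omega)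
        rw [hN _ (by omega), HahnSeries.coeff_zero, zero_mul]
    have hterm1 : (((∑ t ∈ Finset.range a, A t * lamG ^ t) *
        (∑ k ∈ Finset.range K, Msing e (a : ℤ) c ^ k)).coeff yexp).coeff 0 =
        ((A 0).coeff yexp).coeff 0 := by
      rw [mul_sumG, _root_.coeff_sum, _root_.coeff_sum,
        Finset.sum_eq_single_of_mem 0 (Finset.mem_range.2 hK1)]
      · have hp0 : (∑ t ∈ Finset.range a, A t * lamG ^ t) * Msing e (a : ℤ) c ^ 0 =
            ∑ t ∈ Finset.range a, A t * lamG ^ t := by ring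
        rw [hp0]
        exact hP0 a A ha hA yexp
      · intro k _ hk
        rw [Msing_pow, coeff_mul_Msing]
        apply hPzero a A hA
        right
        have hk0 : 0 < (k:ℤ) := by exact_mod_cast Nat.pos_of_ne_zero hk
        have ha' : 0 < (a:ℤ) := by exact_mod_cast ha
        positivity
    rw [hterm1, hterm2, add_zero]
  · rw [if_neg he]
    push_neg at he
    have hMM' : Msing e (a : ℤ) c * Msing (-e) (-(a:ℤ)) c⁻¹ = 1 := by
      rw [Msing, Msing, HahnSeries.single_mul_single, HahnSeries.single_mul_single,
        add_neg_cancel, add_neg_cancel, mul_inv_cancel₀ hc]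
      rfl
    obtain ⟨N, hN⟩ := coeff_lb X
    obtain ⟨K, hKN⟩ : ∃ K : ℕ, yexp - N < (K : ℤ) :=
      ⟨(yexp - N).toNat + 1, by omega⟩
    have h1' := geom_sum_mul (Msing (-e) (-(a:ℤ)) c⁻¹) K
    have hkeyid : (∑ t ∈ Finset.range a, A t * lamG ^ t) *
        (Msing (-e) (-(a:ℤ)) c⁻¹ * ∑ k ∈ Finset.range K, Msing (-e) (-(a:ℤ)) c⁻¹ ^ k) =
        X * Msing (-e) (-(a:ℤ)) c⁻¹ ^ K - X := by
      calc (∑ t ∈ Finset.range a, A t * lamG ^ t) *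
            (Msing (-e) (-(a:ℤ)) c⁻¹ * ∑ k ∈ Finset.range K, Msing (-e) (-(a:ℤ)) c⁻¹ ^ k)
          = (X * (1 - Msing e (a : ℤ) c)) *
            (Msing (-e) (-(a:ℤ)) c⁻¹ * ∑ k ∈ Finset.range K, Msing (-e) (-(a:ℤ)) c⁻¹ ^ k) := by
            rw [h2]
        _ = X * ((∑ k ∈ Finset.range K, Msing (-e) (-(a:ℤ)) c⁻¹ ^ k) *
              (Msing (-e) (-(a:ℤ)) c⁻¹ - 1)) +
            (1 - Msing e (a : ℤ) c * Msing (-e) (-(a:ℤ)) c⁻¹) *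
              (X * ∑ k ∈ Finset.range K, Msing (-e) (-(a:ℤ)) c⁻¹ ^ k) := by ring
        _ = X * (Msing (-e) (-(a:ℤ)) c⁻¹ ^ K - 1) +
            (1 - 1) * (X * ∑ k ∈ Finset.range K, Msing (-e) (-(a:ℤ)) c⁻¹ ^ k) := by
            rw [h1', hMM']
        _ = X * Msing (-e) (-(a:ℤ)) c⁻¹ ^ K - X := by ring
    have hiter : X = X * Msing (-e) (-(a:ℤ)) c⁻¹ ^ K -
        (∑ t ∈ Finset.range a, A t * lamG ^ t) *
        (Msing (-e) (-(a:ℤ)) c⁻¹ * ∑ k ∈ Finset.range K, Msing (-e) (-(a:ℤ)) c⁻¹ ^ k) := by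
      rw [hkeyid]; ring
    rw [hiter, HahnSeries.coeff_sub, HahnSeries.coeff_sub]
    have hterm1 : ((X * Msing (-e) (-(a:ℤ)) c⁻¹ ^ K).coeff yexp).coeff 0 = 0 := by
      rw [Msing_pow, coeff_mul_Msing, coeff_mul_single']
      have hKe : (K : ℤ) ≤ (K : ℤ) * -e :=
        le_mul_of_one_le_right (Int.natCast_nonneg K) (by omega)
      rw [hN _ (by omega), HahnSeries.coeff_zero, zero_mul]
    have hterm2 : (((∑ t ∈ Finset.range a, A t * lamG ^ t) *
        (Msing (-e) (-(a:ℤ)) c⁻¹ * ∑ k ∈ Finset.range K, Msing (-e) (-(a:ℤ)) c⁻¹ ^ k)).coeff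
          yexp).coeff 0 = 0 := by
      have hsplit : Msing (-e) (-(a:ℤ)) c⁻¹ * ∑ k ∈ Finset.range K, Msing (-e) (-(a:ℤ)) c⁻¹ ^ k
          = ∑ k ∈ Finset.range K, Msing (-e) (-(a:ℤ)) c⁻¹ ^ (k + 1) := by
        rw [mul_sumG]
        exact Finset.sum_congr rfl fun k _ => by ring
      rw [hsplit, mul_sumG, _root_.coeff_sum, _root_.coeff_sum]
      refine Finset.sum_eq_zero fun k _ => ?_
      rw [Msing_pow, coeff_mul_Msing]
      apply hPzero a A hA
      left
      have ha' : 0 < (a:ℤ) := by exact_mod_cast ha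
      have hk' : (0:ℤ) ≤ k := Int.natCast_nonneg k
      have : -(((k + 1 : ℕ) : ℤ) * -(a:ℤ)) = ((k:ℤ) + 1) * a := by push_cast; ring
      rw [this]
      exact le_mul_of_one_le_left ha'.le (by omega)
    rw [hterm1, hterm2, zero_sub, neg_zero]

lemma key (c : ℂ) (hc : c ≠ 0) (e : ℤ) (a : ℕ) (ha : 0 < a)
    (A : ℕ → LaurentSeries (LaurentSeries ℂ)) (hA : ∀ t, FreeOfLambda (A t)) (yexp : ℤ) :
    (((∑ t ∈ Finset.range a, A t * lamG ^ t) * (1 - Msing e (a : ℤ) c)⁻¹).coeff yexp).coeff 0 =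
      if 0 ≤ e then ((A 0).coeff yexp).coeff 0 else 0 := by
  have hunit : (1 : LaurentSeries (LaurentSeries ℂ)) - Msing e (a : ℤ) c ≠ 0 := by
    intro h
    replace h := (sub_eq_zero (G := LaurentSeries (LaurentSeries ℂ))).mp h
    have h2 := congrArg (fun g => HahnSeries.coeff g e) h
    simp only [Msing] at h2
    by_cases he : e = 0
    · subst he
      rw [HahnSeries.coeff_one, if_pos rfl, HahnSeries.coeff_single_same] at h2
      have h3 := congrArg (fun g => HahnSeries.coeff g (0:ℤ)) h2
      rw [HahnSeries.coeff_one, if_pos rfl, HahnSeries.coeff_single_of_ne] at h3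
      · exact one_ne_zero h3
      · exact_mod_cast fun h => ha.ne' (by exact_mod_cast h.symm)
    · rw [HahnSeries.coeff_one, if_neg he, HahnSeries.coeff_single_same] at h2
      have := congrArg (fun g => HahnSeries.coeff g (a:ℤ)) h2
      simp only [HahnSeries.coeff_zero, HahnSeries.coeff_single_same] at this
      exact hc this.symm
  refine key' c hc e a ha A hA _ ?_ yexp
  exact inv_mul_cancel_right₀ (G₀ := LaurentSeries (LaurentSeries ℂ)) hunit
    (∑ t ∈ Finset.range a, A t * lamG ^ t)

/-- In the iterated Laurent series field `G = ℂ((λ))((y))`, let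
`E = Σ_i A_i(λ)/(1 - u_i λ^{a_i})` with `u_i = c_i y^{e_i}` monomials (`c_i ≠ 0`),
`a_i > 0`, and `A_i(λ)` of degree `< a_i` with coefficients free of `λ`.
A factor is small iff `e_i ≥ 0`.  Then the constant term of `E` in `λ` equals
`Σ_{i small} A_i(0)`. -/
theorem stmt11 (n : ℕ) (c : Fin n → ℂ) (hc : ∀ i, c i ≠ 0)
    (e : Fin n → ℤ) (a : Fin n → ℕ) (ha : ∀ i, 0 < a i)
    (A : Fin n → ℕ → LaurentSeries (LaurentSeries ℂ))
    (hAfree : ∀ i t, FreeOfLambda (A i t))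
    (M : Fin n → LaurentSeries (LaurentSeries ℂ))
    (hM : ∀ i, M i = HahnSeries.single (e i) (HahnSeries.single (0 : ℤ) (c i)) * lamG ^ a i)
    (E : LaurentSeries (LaurentSeries ℂ))
    (hE : E = ∑ i, (∑ t ∈ Finset.range (a i), A i t * lamG ^ t) * (1 - M i)⁻¹) :
    ∀ yexp : ℤ,
      (E.coeff yexp).coeff 0 =
        (((Finset.univ.filter fun i => 0 ≤ e i).sum fun i => A i 0).coeff yexp).coeff 0 := by
  intro yexp
  have hMs : ∀ i, M i = Msing (e i) (a i : ℤ) (c i) := by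
    intro i
    rw [hM i, lamG_pow, Msing, HahnSeries.single_mul_single, HahnSeries.single_mul_single,
      add_zero, zero_add, mul_one]
  have hterm : ∀ i : Fin n,
      ((((∑ t ∈ Finset.range (a i), A i t * lamG ^ t) * (1 - M i)⁻¹).coeff yexp)).coeff 0 =
        if 0 ≤ e i then ((A i 0).coeff yexp).coeff 0 else 0 := by
    intro i
    rw [hMs i]
    exact key (c i) (hc i) (e i) (a i) (ha i) (A i) (hAfree i) yexp
  rw [hE, _root_.coeff_sum, _root_.coeff_sum, Finset.sum_congr rfl fun i _ => hterm i,
    _root_.coeff_sum, _root_.coeff_sum, Finset.sum_filter]
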